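/- arXiv:math/0009087 — 5 statements merged into one kernel-verified Lean document; each statement's English description precedes it below -/
import Mathlib

section
/- If a complete first-order theory T has SOP₃, then T has SOP₂. -/
open FirstOrder FirstOrder.Language

universe u v w

namespace Sh692

variable {L : FirstOrder.Language.{u, v}}

/-- The restriction `η↾k` of an infinite binary sequence, as a finite binary sequence. -/
def restr (η : ℕ → Fin 2) (k : ℕ) : List (Fin 2) := List.ofFn fun i : Fin k => η i

/-- `a` is an (order-)indiscernible sequence of `m`-tuples in `M`. -/
def IsIndiscernibleSeq (L : FirstOrder.Language.{u, v}) {M : Type w} [L.Structure M] {m : ℕ}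
    (a : ℕ → Fin m → M) : Prop :=
  ∀ (k : ℕ) (ψ : L.Formula (Fin k × Fin m)) (i j : Fin k → ℕ),
    StrictMono i → StrictMono j →
      (ψ.Realize (fun q => a (i q.1) q.2) ↔ ψ.Realize (fun q => a (j q.1) q.2))

/-- `T` has SOP₃: in a (monster) model of `T` there are an indiscernible sequence `(ā_i)`,
formulas `φ, ψ` and tuples `(b̄_j)` with (a) `{φ, ψ}` contradictory, (b) `i ≤ j` implies
`⊨ φ[b̄_j, ā_i]` and `i > j` implies `⊨ ψ[b̄_j, ā_i]`, and (c) for `i < j`,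
`{φ(x̄, ā_j), ψ(x̄, ā_i)}` is contradictory. -/
def HasSOP3 (T : L.Theory) : Prop :=
  ∃ (p m : ℕ) (φ ψ : L.Formula (Fin p ⊕ Fin m)) (M : Theory.ModelType.{u, v, w} T)
    (a : ℕ → Fin m → M) (b : ℕ → Fin p → M),
    IsIndiscernibleSeq L a ∧
    (∀ (x : Fin p → M) (y : Fin m → M),
      ¬ (φ.Realize (Sum.elim x y) ∧ ψ.Realize (Sum.elim x y))) ∧
    (∀ i j : ℕ, i ≤ j → φ.Realize (Sum.elim (b j) (a i))) ∧
    (∀ i j : ℕ, j < i → ψ.Realize (Sum.elim (b j) (a i))) ∧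
    (∀ i j : ℕ, i < j →
      ¬ ∃ x : Fin p → M, φ.Realize (Sum.elim x (a j)) ∧ ψ.Realize (Sum.elim x (a i)))

/-- `T` has SOP₂: there are a formula `φ(x̄,ȳ)` and tuples `ā_η`, `η ∈ 2^{<ω}`, in a
(monster) model of `T` such that (a) for every `η ∈ 2^ω` the set
`{φ(x̄, ā_{η↾n}) : n < ω}` is consistent (here: finitely satisfiable), and (b) for
incomparable `η, ν`, `{φ(x̄, ā_η), φ(x̄, ā_ν)}` is inconsistent. -/
def HasSOP2 (T : L.Theory) : Prop :=
  ∃ (p m : ℕ) (φ : L.Formula (Fin p ⊕ Fin m)) (M : Theory.ModelType.{u, v, w} T)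
    (a : List (Fin 2) → Fin m → M),
    (∀ η : ℕ → Fin 2, ∀ N : ℕ, ∃ x : Fin p → M,
      ∀ k < N, φ.Realize (Sum.elim x (a (restr η k)))) ∧
    (∀ η ν : List (Fin 2), ¬ η <+: ν → ¬ ν <+: η →
      ¬ ∃ x : Fin p → M, φ.Realize (Sum.elim x (a η)) ∧ φ.Realize (Sum.elim x (a ν)))

/-! ### Auxiliary dyadic combinatorics -/

/-- The dyadic rational left endpoint of the interval coded by a binary string. -/
def dy : List (Fin 2) → ℚ
  | [] => 0
  | b :: t => (b.val : ℚ) / 2 + dy t / 2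

/-- The length of the dyadic interval coded by a binary string. -/
def len2 (η : List (Fin 2)) : ℚ := ((2 : ℚ) ^ η.length)⁻¹

lemma len2_pos (η : List (Fin 2)) : 0 < len2 η := by
  unfold len2; positivity

lemma len2_cons (b : Fin 2) (t : List (Fin 2)) : len2 (b :: t) = len2 t / 2 := by
  simp only [len2, List.length_cons, pow_succ]
  rw [mul_inv]
  ring

lemma dy_nonneg : ∀ η : List (Fin 2), 0 ≤ dy η
  | [] => le_refl 0
  | b :: t => by
      have h1 := dy_nonneg t
      have h2 : (0 : ℚ) ≤ (b.val : ℚ) := Nat.cast_nonneg _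
      unfold dy
      linarith

lemma dy_add_len2_le_one : ∀ η : List (Fin 2), dy η + len2 η ≤ 1
  | [] => by simp [dy, len2]
  | b :: t => by
      have h := dy_add_len2_le_one t
      have hb : (b.val : ℚ) ≤ 1 := by
        have := b.isLt
        exact_mod_cast Nat.lt_succ_iff.mp this
      rw [len2_cons]
      unfold dy
      linarith

lemma dy_append (η τ : List (Fin 2)) :
    dy η ≤ dy (η ++ τ) ∧ dy (η ++ τ) + len2 (η ++ τ) ≤ dy η + len2 η := by
  induction η with
  | nil =>
      simpa [dy, len2] using ⟨dy_nonneg τ, dy_add_len2_le_one τ⟩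
  | cons b t ih =>
      rw [List.cons_append]
      unfold dy
      rw [len2_cons, len2_cons]
      constructor <;> linarith [ih.1, ih.2]

lemma dy_prefix {η ν : List (Fin 2)} (h : η <+: ν) :
    dy η ≤ dy ν ∧ dy ν + len2 ν ≤ dy η + len2 η := by
  obtain ⟨τ, rfl⟩ := h
  exact dy_append η τ

lemma dy_append_singleton (η : List (Fin 2)) (b : Fin 2) :
    dy (η ++ [b]) = dy η + (b.val : ℚ) * len2 η / 2 := by
  induction η with
  | nil => simp [dy, len2]
  | cons c t ih =>
      rw [List.cons_append]
      unfold dy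
      rw [ih, len2_cons]
      ring

lemma len2_append_singleton (η : List (Fin 2)) (b : Fin 2) :
    len2 (η ++ [b]) = len2 η / 2 := by
  unfold len2
  rw [List.length_append, List.length_cons, List.length_nil, pow_succ, mul_inv]
  ring

lemma dy_split {σ η ν : List (Fin 2)} {i j : Fin 2} (hij : i.val < j.val)
    (h1 : σ ++ [i] <+: η) (h2 : σ ++ [j] <+: ν) :
    dy η + len2 η ≤ dy ν := by
  have hi2 := i.isLt
  have hj2 := j.isLt
  have hi : i.val = 0 := by omega
  have hj : j.val = 1 := by omega
  have e1 : dy (σ ++ [i]) = dy σ := by rw [dy_append_singleton, hi]; simp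
  have e2 : dy (σ ++ [j]) = dy σ + len2 σ / 2 := by
    rw [dy_append_singleton, hj]; push_cast; ring
  have l1 := len2_append_singleton σ i
  have p1 := dy_prefix h1
  have p2 := dy_prefix h2
  linarith [p1.2, p2.1]

lemma exists_split (η : List (Fin 2)) : ∀ ν : List (Fin 2), ¬ η <+: ν → ¬ ν <+: η →
    ∃ (σ : List (Fin 2)) (i j : Fin 2), i ≠ j ∧ σ ++ [i] <+: η ∧ σ ++ [j] <+: ν := by
  induction η with
  | nil => intro ν h1 _; exact absurd (List.nil_prefix) h1
  | cons a t ih =>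
      intro ν h1 h2
      match ν with
      | [] => exact absurd (List.nil_prefix) h2
      | b :: s =>
          by_cases hab : a = b
          · subst hab
            have h1' : ¬ t <+: s := fun h => h1 (List.cons_prefix_cons.mpr ⟨rfl, h⟩)
            have h2' : ¬ s <+: t := fun h => h2 (List.cons_prefix_cons.mpr ⟨rfl, h⟩)
            obtain ⟨σ, i, j, hij, p1, p2⟩ := ih s h1' h2'
            exact ⟨a :: σ, i, j, hij, List.cons_prefix_cons.mpr ⟨rfl, p1⟩,
              List.cons_prefix_cons.mpr ⟨rfl, p2⟩⟩
          · exact ⟨[], a, b, hab, ⟨t, rfl⟩, ⟨s, rfl⟩⟩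

/-! ### Floor maps from dyadic rationals to naturals -/

/-- Approximating index map: scale by `2^n` and take the floor. -/
def fl (n : ℕ) (q : ℚ) : ℕ := ⌊(2 : ℚ) ^ n * q⌋₊

lemma fl_mono (n : ℕ) {q q' : ℚ} (h : q ≤ q') : fl n q ≤ fl n q' := by
  apply Nat.floor_mono
  have h2 : (0 : ℚ) ≤ 2 ^ n := by positivity
  nlinarith

lemma fl_lt (n : ℕ) {q q' : ℚ} (hq : 0 ≤ q) (h : q + ((2 : ℚ) ^ n)⁻¹ ≤ q') :
    fl n q < fl n q' := by
  have h2 : (0 : ℚ) < 2 ^ n := by positivity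
  have h0 : (0 : ℚ) ≤ 2 ^ n * q := by positivity
  have hfl : (fl n q : ℚ) ≤ 2 ^ n * q := Nat.floor_le h0
  have key : ((fl n q + 1 : ℕ) : ℚ) ≤ 2 ^ n * q' := by
    push_cast
    have hmul : 2 ^ n * (q + (2 ^ n)⁻¹) ≤ 2 ^ n * q' :=
      mul_le_mul_of_nonneg_left h (le_of_lt h2)
    rw [mul_add, mul_inv_cancel₀ (ne_of_gt h2)] at hmul
    linarith
  exact Nat.lt_of_lt_of_le (Nat.lt_succ_self _) (Nat.le_floor key)

/-! ### Restrictions -/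

lemma restr_length (η : ℕ → Fin 2) (k : ℕ) : (restr η k).length = k := by
  simp [restr]

lemma restr_succ (η : ℕ → Fin 2) (n : ℕ) : restr η (n + 1) = restr η n ++ [η n] := by
  rw [restr, List.ofFn_succ', List.concat_eq_append, restr]
  simp

lemma restr_prefix (η : ℕ → Fin 2) {k n : ℕ} (h : k ≤ n) : restr η k <+: restr η n := by
  induction n with
  | zero =>
      have hk : k = 0 := by omega
      subst hk
      exact List.prefix_refl _
  | succ n ih =>
      rcases Nat.lt_or_ge k (n + 1) with h' | h'
      · have hp := ih (by omega)
        refine hp.trans ?_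
        rw [restr_succ]
        exact List.prefix_append _ _
      · have hk : k = n + 1 := by omega
        subst hk
        exact List.prefix_refl _

/-! ### Łoś-type transfer for a single formula -/

lemma los_formula {Mc : Type w} [L.Structure Mc] [Nonempty Mc] (U : Ultrafilter ℕ)
    {β : Type*} (θ : L.Formula β) (X : β → ℕ → Mc) :
    (θ.Realize (fun q => ((X q : ℕ → Mc) : (U : Filter ℕ).Product (fun _ => Mc))) ↔
      ∀ᶠ n in (U : Filter ℕ), θ.Realize (fun q => X q n)) :=
  Ultraproduct.realize_formula_cast θ X

/-- If a complete first-order theory `T` has SOP₃, then `T` has SOP₂. -/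
theorem hasSOP2_of_hasSOP3 (T : L.Theory) (hT : T.IsComplete) :
    HasSOP3.{u, v, w} T → HasSOP2.{u, v, w} T := by
  rintro ⟨p, m, φ, ψ, M, a, b, _hind, hcontra, hφ, hψ, hopp⟩
  classical
  set U : Ultrafilter ℕ := Filter.hyperfilter ℕ with hU
  haveI : ∀ n : ℕ, Nonempty ((fun _ : ℕ => M.Carrier) n) := fun _ => M.nonempty'
  haveI hNe : Nonempty M.Carrier := M.nonempty'
  haveI hmod : T.Model ((U : Filter ℕ).Product (fun _ : ℕ => M.Carrier)) :=
    ⟨fun φ₀ hφ₀ => (Ultraproduct.sentence_realize φ₀).2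
      (Filter.Eventually.of_forall fun _ => T.realize_sentence_of_mem hφ₀)⟩
  -- the SOP₂ formula
  let r1 : Fin p ⊕ Fin m → Fin p ⊕ Fin (m + m) := Sum.map id (Fin.castAdd m)
  let r2 : Fin p ⊕ Fin m → Fin p ⊕ Fin (m + m) := Sum.map id (Fin.natAdd m)
  -- the representative functions for the parameters
  have master : ∀ (ηl : List (Fin 2)) (v : Fin p → M.Carrier) (n : ℕ),
      ((φ.relabel r1 ⊓ ψ.relabel r2).Realize
        (Sum.elim v (Fin.append (fun i : Fin m => a (fl n (dy ηl)) i)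
          (fun i : Fin m => a (fl n (dy ηl + len2 ηl)) i))) ↔
        (φ.Realize (Sum.elim v (a (fl n (dy ηl)))) ∧
          ψ.Realize (Sum.elim v (a (fl n (dy ηl + len2 ηl)))))) := by
    intro ηl v n
    rw [Formula.realize_inf, Formula.realize_relabel, Formula.realize_relabel]
    have e1 : (Sum.elim v (Fin.append (fun i : Fin m => a (fl n (dy ηl)) i)
        (fun i : Fin m => a (fl n (dy ηl + len2 ηl)) i))) ∘ r1
        = Sum.elim v (a (fl n (dy ηl))) := by
      funext q
      rcases q with i | i
      · rfl
      · exact Fin.append_left _ _ i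
    have e2 : (Sum.elim v (Fin.append (fun i : Fin m => a (fl n (dy ηl)) i)
        (fun i : Fin m => a (fl n (dy ηl + len2 ηl)) i))) ∘ r2
        = Sum.elim v (a (fl n (dy ηl + len2 ηl))) := by
      funext q
      rcases q with i | i
      · rfl
      · exact Fin.append_right _ _ i
    rw [e1, e2]
  refine ⟨p, m + m, φ.relabel r1 ⊓ ψ.relabel r2, ⟨(U : Filter ℕ).Product (fun _ : ℕ => M.Carrier)⟩,
    fun ηl k => ((fun n => Fin.append (fun i : Fin m => a (fl n (dy ηl)) i)
      (fun i : Fin m => a (fl n (dy ηl + len2 ηl)) i) k : ℕ → M.Carrier) :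
        (U : Filter ℕ).Product (fun _ : ℕ => M.Carrier)), ?_, ?_⟩
  · -- branch consistency
    intro η N
    refine ⟨fun i => ((fun n => b (fl n (dy (restr η N))) i : ℕ → M.Carrier) :
      (U : Filter ℕ).Product (fun _ : ℕ => M.Carrier)), ?_⟩
    intro k hk
    have hval : (Sum.elim
        (fun i => ((fun n => b (fl n (dy (restr η N))) i : ℕ → M.Carrier) :
          (U : Filter ℕ).Product (fun _ : ℕ => M.Carrier)))
        (fun k' => ((fun n => Fin.append (fun i : Fin m => a (fl n (dy (restr η k))) i)
          (fun i : Fin m => a (fl n (dy (restr η k) + len2 (restr η k))) i) k' : ℕ → M.Carrier) :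
            (U : Filter ℕ).Product (fun _ : ℕ => M.Carrier))))
        = fun q => ((Sum.elim (fun i n => b (fl n (dy (restr η N))) i)
            (fun k' n => Fin.append (fun i : Fin m => a (fl n (dy (restr η k))) i)
              (fun i : Fin m => a (fl n (dy (restr η k) + len2 (restr η k))) i) k') q : ℕ → M.Carrier) :
                (U : Filter ℕ).Product (fun _ : ℕ => M.Carrier)) := by
      funext q; rcases q with i | i <;> rfl
    beta_reduce
    erw [hval, los_formula]
    have hev : ∀ᶠ n in (U : Filter ℕ), N ≤ n :=
      (Filter.eventually_ge_atTop N).filter_mono Nat.hyperfilter_le_atTop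
    refine hev.mono ?_
    intro n hn
    have hswap : (fun q => Sum.elim (fun i n' => b (fl n' (dy (restr η N))) i)
        (fun k' n' => Fin.append (fun i : Fin m => a (fl n' (dy (restr η k))) i)
          (fun i : Fin m => a (fl n' (dy (restr η k) + len2 (restr η k))) i) k') q n)
        = Sum.elim (fun i => b (fl n (dy (restr η N))) i)
          (Fin.append (fun i : Fin m => a (fl n (dy (restr η k))) i)
            (fun i : Fin m => a (fl n (dy (restr η k) + len2 (restr η k))) i)) := by
      funext q; rcases q with i | i <;> rfl
    rw [hswap, master]
    have hpre := dy_prefix (restr_prefix η (le_of_lt hk))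
    constructor
    · exact hφ _ _ (fl_mono n hpre.1)
    · apply hψ
      apply fl_lt n (dy_nonneg _)
      have hlen : ((2 : ℚ) ^ n)⁻¹ ≤ len2 (restr η N) := by
        unfold len2
        rw [restr_length]
        have h1 : (2 : ℚ) ^ N ≤ 2 ^ n := by
          apply pow_le_pow_right₀ (by norm_num) hn
        have h2 : (0 : ℚ) < 2 ^ N := by positivity
        exact inv_anti₀ h2 h1
      linarith [hpre.2]
  · -- incomparability
    intro η ν h1 h2
    rintro ⟨x, hx1, hx2⟩
    obtain ⟨σ, i, j, hij, p1, p2⟩ := exists_split η ν h1 h2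
    choose xf hxf using fun i => Quotient.exists_rep (x i)
    have hx : (fun i => ((xf i : ℕ → M.Carrier) :
        (U : Filter ℕ).Product (fun _ : ℕ => M.Carrier))) = x := funext fun i => hxf i
    rw [← hx] at hx1 hx2
    have transfer : ∀ ηl : List (Fin 2),
        ((φ.relabel r1 ⊓ ψ.relabel r2).Realize
          (Sum.elim (fun i => ((xf i : ℕ → M.Carrier) :
            (U : Filter ℕ).Product (fun _ : ℕ => M.Carrier)))
          (fun k => ((fun n => Fin.append (fun i : Fin m => a (fl n (dy ηl)) i)
            (fun i : Fin m => a (fl n (dy ηl + len2 ηl)) i) k : ℕ → M.Carrier) :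
              (U : Filter ℕ).Product (fun _ : ℕ => M.Carrier))))) →
        ∀ᶠ n in (U : Filter ℕ),
          (φ.Realize (Sum.elim (fun i => xf i n) (a (fl n (dy ηl)))) ∧
            ψ.Realize (Sum.elim (fun i => xf i n) (a (fl n (dy ηl + len2 ηl))))) := by
      intro ηl hreal
      have hval : (Sum.elim (fun i => ((xf i : ℕ → M.Carrier) :
            (U : Filter ℕ).Product (fun _ : ℕ => M.Carrier)))
          (fun k => ((fun n => Fin.append (fun i : Fin m => a (fl n (dy ηl)) i)
            (fun i : Fin m => a (fl n (dy ηl + len2 ηl)) i) k : ℕ → M.Carrier) :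
              (U : Filter ℕ).Product (fun _ : ℕ => M.Carrier))))
          = fun q => ((Sum.elim xf
              (fun k n => Fin.append (fun i : Fin m => a (fl n (dy ηl)) i)
                (fun i : Fin m => a (fl n (dy ηl + len2 ηl)) i) k) q : ℕ → M.Carrier) :
                  (U : Filter ℕ).Product (fun _ : ℕ => M.Carrier)) := by
        funext q; rcases q with i | i <;> rfl
      rw [hval, los_formula] at hreal
      refine hreal.mono ?_
      intro n hn
      have hswap : (fun q => Sum.elim xf
          (fun k n' => Fin.append (fun i : Fin m => a (fl n' (dy ηl)) i)
            (fun i : Fin m => a (fl n' (dy ηl + len2 ηl)) i) k) q n)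
          = Sum.elim (fun i => xf i n)
            (Fin.append (fun i : Fin m => a (fl n (dy ηl)) i)
              (fun i : Fin m => a (fl n (dy ηl + len2 ηl)) i)) := by
        funext q; rcases q with i | i <;> rfl
      rw [hswap, master] at hn
      exact hn
    have E1 := transfer η hx1
    have E2 := transfer ν hx2
    obtain ⟨n, e1, e2⟩ := (E1.and E2).exists
    have key : ∀ (η' ν' : List (Fin 2)), dy η' + len2 η' ≤ dy ν' →
        φ.Realize (Sum.elim (fun i => xf i n) (a (fl n (dy ν')))) →
        ψ.Realize (Sum.elim (fun i => xf i n) (a (fl n (dy η' + len2 η')))) → False := by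
      intro η' ν' hle hφ' hψ'
      have hmn : fl n (dy η' + len2 η') ≤ fl n (dy ν') := fl_mono n hle
      rcases lt_or_eq_of_le hmn with hlt | heq
      · exact hopp _ _ hlt ⟨_, hφ', hψ'⟩
      · exact hcontra (fun i => xf i n) (a (fl n (dy ν'))) ⟨hφ', heq ▸ hψ'⟩
    have hi2 := i.isLt
    have hj2 := j.isLt
    have hne : i.val ≠ j.val := fun h => hij (Fin.val_injective h)
    rcases Nat.lt_or_ge i.val j.val with hlt | hge
    · exact key η ν (dy_split hlt p1 p2) e2.1 e1.2
    · have hlt' : j.val < i.val := by omega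
      exact key ν η (dy_split hlt' p2 p1) e1.1 e2.2

end Sh692
end

section
/- If the formula φ(x̄,ȳ) exemplifies SOP₁ for the theory T (witnessed by tuples ā_η, η ∈ 2^{<ω}), then defining b̄_η := ā_{η⌢⟨1⟩} for η ∈ 2^{<ω}, the formula φ together with the family (b̄_η) exemplifies SOP₁′: (a) for every η ∈ 2^ω the set {φ(x̄, b̄_{η↾n})^{η(n)} : n < ω} is consistent, where φ¹ = φ and φ⁰ = ¬φ; and (b) if ν⌢⟨0⟩ ⊴ η then {φ(x̄, b̄_η), φ(x̄, b̄_ν)} is inconsistent. -/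
open FirstOrder FirstOrder.Language

universe u v w

namespace Sh692

variable {L : FirstOrder.Language.{u, v}}

/-- If `φ(x̄,ȳ)` exemplifies SOP₁ for `T` (witnessed by `(ā_η)_{η ∈ 2^{<ω}}` in a model
`M` of `T`), then with `b̄_η := ā_{η⌢⟨1⟩}` the formula `φ` together with `(b̄_η)`
exemplifies SOP₁′: (a) for every `η ∈ 2^ω`, `{φ(x̄, b̄_{η↾n})^{η(n)} : n < ω}` is
consistent (finitely satisfiable), where `φ¹ = φ`, `φ⁰ = ¬φ`; and (b) if `ν⌢⟨0⟩ ⊴ η`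
then `{φ(x̄, b̄_η), φ(x̄, b̄_ν)}` is inconsistent. -/
theorem sop1_witnesses_give_sop1' (T : L.Theory) (hT : T.IsComplete)
    {p m : ℕ} (φ : L.Formula (Fin p ⊕ Fin m)) (M : Theory.ModelType.{u, v, w} T)
    (a : List (Fin 2) → Fin m → M)
    (hcons : ∀ η : ℕ → Fin 2, ∀ N : ℕ, ∃ x : Fin p → M,
      ∀ k < N, φ.Realize (Sum.elim x (a (restr η k))))
    (hinc : ∀ ν η : List (Fin 2), ν ++ [(0 : Fin 2)] <+: η →
      ¬ ∃ x : Fin p → M,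
        φ.Realize (Sum.elim x (a η)) ∧ φ.Realize (Sum.elim x (a (ν ++ [(1 : Fin 2)]))))
    (b : List (Fin 2) → Fin m → M) (hb : ∀ η, b η = a (η ++ [(1 : Fin 2)])) :
    (∀ η : ℕ → Fin 2, ∀ N : ℕ, ∃ x : Fin p → M, ∀ k < N,
      (if η k = (1 : Fin 2) then φ.Realize (Sum.elim x (b (restr η k)))
        else ¬ φ.Realize (Sum.elim x (b (restr η k))))) ∧
    (∀ ν η : List (Fin 2), ν ++ [(0 : Fin 2)] <+: η →
      ¬ ∃ x : Fin p → M,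
        φ.Realize (Sum.elim x (b η)) ∧ φ.Realize (Sum.elim x (b ν))) := by
  have hrs : ∀ (η : ℕ → Fin 2) (k : ℕ), restr η (k + 1) = restr η k ++ [η k] := by
    intro η k
    rw [restr, restr, List.ofFn_succ', List.concat_eq_append]
    rfl
  constructor
  · intro η N
    obtain ⟨x, hx⟩ := hcons η (N + 1)
    refine ⟨x, fun k hk => ?_⟩
    rw [hb]
    by_cases h1 : η k = 1
    · simp only [h1, if_true]
      have := hx (k + 1) (by omega)
      rwa [hrs, h1] at this
    · have h0 : η k = 0 := by omega
      simp only [h1, if_false]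
      intro hφ
      exact hinc (restr η k) (restr η (k + 1))
        (by rw [hrs, h0]) ⟨x, hx (k+1) (by omega), hφ⟩
  · intro ν η hpre
    rw [hb, hb]
    exact hinc ν (η ++ [1]) (hpre.trans ⟨[1], rfl⟩)

end Sh692
end

section
/- If a complete first-order theory T satisfies SOP₁, then T is not simple; in fact, any formula φ(x̄,ȳ) exemplifying SOP₁ also exemplifies the tree property of T. -/
open FirstOrder FirstOrder.Language

universe u v w

namespace Sh692

variable {L : FirstOrder.Language.{u, v}}

/-- The restriction `ν↾k` of an element of `ω^ω`, as a finite sequence. -/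
def restrNat (ν : ℕ → ℕ) (k : ℕ) : List ℕ := List.ofFn fun i : Fin k => ν i

/-- `T` has the tree property: there are a formula `φ(x̄,ȳ)` and tuples `b̄_ν`,
`ν ∈ ω^{<ω}`, in a (monster) model of `T` such that for each `ν ∈ ω^{<ω}` the formulas
`{φ(x̄, b̄_{ν⌢⟨k⟩}) : k < ω}` are pairwise inconsistent, while for each `ν ∈ ω^ω` the set
`{φ(x̄, b̄_{ν↾n}) : n < ω}` is consistent (finitely satisfiable). -/
def HasTreeProperty (T : L.Theory) : Prop :=
  ∃ (p m : ℕ) (φ : L.Formula (Fin p ⊕ Fin m)) (M : Theory.ModelType.{u, v, w} T)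
    (b : List ℕ → Fin m → M),
    (∀ (ν : List ℕ) (k₁ k₂ : ℕ), k₁ ≠ k₂ →
      ¬ ∃ x : Fin p → M,
        φ.Realize (Sum.elim x (b (ν ++ [k₁]))) ∧ φ.Realize (Sum.elim x (b (ν ++ [k₂])))) ∧
    (∀ ν : ℕ → ℕ, ∀ N : ℕ, ∃ x : Fin p → M,
      ∀ k < N, φ.Realize (Sum.elim x (b (restrNat ν k))))

/-- `T` is simple iff no formula has the tree property. -/
def IsSimple (T : L.Theory) : Prop := ¬ HasTreeProperty.{u, v, w} T


/-- Embedding of `ω^{<ω}` into `2^{<ω}`: `⟨k₀,…,k_{n-1}⟩ ↦ 0^{k₀}⌢1⌢0^{k₁}⌢1⌢⋯`. -/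
def emb (ν : List ℕ) : List (Fin 2) :=
  ν.flatMap fun k => List.replicate k 0 ++ [1]

lemma emb_append (ν w : List ℕ) : emb (ν ++ w) = emb ν ++ emb w :=
  List.flatMap_append

lemma emb_singleton (k : ℕ) : emb [k] = List.replicate k 0 ++ [1] := by
  simp [emb]

lemma length_le_emb (ν : List ℕ) : ν.length ≤ (emb ν).length := by
  induction ν with
  | nil => simp [emb]
  | cons k t ih => simp [emb, List.flatMap_cons] at *; omega

lemma emb_prefix {ν ν' : List ℕ} (h : ν <+: ν') : emb ν <+: emb ν' := by
  obtain ⟨w, rfl⟩ := h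
  rw [emb_append]; exact List.prefix_append _ _

lemma restrNat_succ (ν : ℕ → ℕ) (k : ℕ) :
    restrNat ν (k + 1) = restrNat ν k ++ [ν k] := by
  simp only [restrNat, List.ofFn_succ', List.concat_eq_append, Fin.coe_castSucc,
    Fin.val_last]

lemma restrNat_prefix (ν : ℕ → ℕ) {k k' : ℕ} (h : k ≤ k') :
    restrNat ν k <+: restrNat ν k' := by
  induction k' with
  | zero => simp_all
  | succ n ih =>
    rcases Nat.lt_or_ge k (n+1) with h' | h'
    · exact (ih (by omega)).trans (by rw [restrNat_succ]; exact List.prefix_append _ _)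
    · have : k = n + 1 := by omega
      subst this; exact List.prefix_refl _

lemma length_restrNat (ν : ℕ → ℕ) (k : ℕ) : (restrNat ν k).length = k := by
  simp [restrNat]

lemma emb_length_lt (ν : ℕ → ℕ) {k N : ℕ} (h : k < N) :
    (emb (restrNat ν k)).length < (emb (restrNat ν N)).length := by
  have h1 : (emb (restrNat ν k)).length < (emb (restrNat ν (k+1))).length := by
    rw [restrNat_succ, emb_append]
    simp [emb_singleton]
  have h2 := (emb_prefix (restrNat_prefix ν (show k+1 ≤ N by omega))).length_le
  omega

/-- If `T` satisfies SOP₁ then `T` is not simple; in fact, if `φ(x̄,ȳ)` exemplifies SOP₁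
of `T` (with witnesses `(ā_η)` in a model `M`), then the same formula `φ` exemplifies the
tree property of `T`. -/
theorem not_simple_of_sop1 (T : L.Theory) (hT : T.IsComplete)
    {p m : ℕ} (φ : L.Formula (Fin p ⊕ Fin m)) (M : Theory.ModelType.{u, v, w} T)
    (a : List (Fin 2) → Fin m → M)
    (hcons : ∀ η : ℕ → Fin 2, ∀ N : ℕ, ∃ x : Fin p → M,
      ∀ k < N, φ.Realize (Sum.elim x (a (restr η k))))
    (hinc : ∀ ν η : List (Fin 2), ν ++ [(0 : Fin 2)] <+: η →
      ¬ ∃ x : Fin p → M,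
        φ.Realize (Sum.elim x (a η)) ∧ φ.Realize (Sum.elim x (a (ν ++ [(1 : Fin 2)])))) :
    (∃ b : List ℕ → Fin m → M,
      (∀ (ν : List ℕ) (k₁ k₂ : ℕ), k₁ ≠ k₂ →
        ¬ ∃ x : Fin p → M,
          φ.Realize (Sum.elim x (b (ν ++ [k₁]))) ∧
            φ.Realize (Sum.elim x (b (ν ++ [k₂])))) ∧
      (∀ ν : ℕ → ℕ, ∀ N : ℕ, ∃ x : Fin p → M,
        ∀ k < N, φ.Realize (Sum.elim x (b (restrNat ν k))))) ∧
    ¬ IsSimple.{u, v, w} T := by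
  set b : List ℕ → Fin m → M := fun σ => a (emb σ) with hb
  -- inconsistency, ordered version
  have inc : ∀ (ν : List ℕ) (k₁ k₂ : ℕ), k₁ < k₂ →
      ¬ ∃ x : Fin p → M,
        φ.Realize (Sum.elim x (b (ν ++ [k₂]))) ∧ φ.Realize (Sum.elim x (b (ν ++ [k₁]))) := by
    intro ν k₁ k₂ hk
    have e1 : emb (ν ++ [k₁]) = (emb ν ++ List.replicate k₁ 0) ++ [(1 : Fin 2)] := by
      rw [emb_append, emb_singleton, List.append_assoc]
    have e2 : ((emb ν ++ List.replicate k₁ 0) ++ [(0 : Fin 2)]) <+: emb (ν ++ [k₂]) := by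
      rw [emb_append, emb_singleton]
      refine ⟨List.replicate (k₂ - k₁ - 1) 0 ++ [(1 : Fin 2)], ?_⟩
      have : List.replicate k₂ (0 : Fin 2)
          = (List.replicate k₁ 0 ++ [0]) ++ List.replicate (k₂ - k₁ - 1) 0 := by
        rw [← List.replicate_succ', ← List.replicate_add]
        congr 1; omega
      rw [this]; simp [List.append_assoc]
    have := hinc (emb ν ++ List.replicate k₁ 0) (emb (ν ++ [k₂])) e2
    rw [← e1] at this
    exact this
  have inc' : ∀ (ν : List ℕ) (k₁ k₂ : ℕ), k₁ ≠ k₂ →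
      ¬ ∃ x : Fin p → M,
        φ.Realize (Sum.elim x (b (ν ++ [k₁]))) ∧ φ.Realize (Sum.elim x (b (ν ++ [k₂]))) := by
    intro ν k₁ k₂ hk
    rcases Nat.lt_or_ge k₁ k₂ with h | h
    · intro ⟨x, h1, h2⟩; exact inc ν k₁ k₂ h ⟨x, h2, h1⟩
    · have h' : k₂ < k₁ := by omega
      intro ⟨x, h1, h2⟩; exact inc ν k₂ k₁ h' ⟨x, h1, h2⟩
  have cons : ∀ ν : ℕ → ℕ, ∀ N : ℕ, ∃ x : Fin p → M,
      ∀ k < N, φ.Realize (Sum.elim x (b (restrNat ν k))) := by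
    intro ν N
    set η : ℕ → Fin 2 := fun i => (emb (restrNat ν (i + 1))).getD i 0 with hη
    have key : ∀ k : ℕ, restr η (emb (restrNat ν k)).length = emb (restrNat ν k) := by
      intro k
      apply List.ext_getElem
      · simp [restr]
      · intro i h1 h2
        have hi : (restr η (emb (restrNat ν k)).length)[i] = η i := by
          simp [restr]
        rw [hi]
        have hηi : η i = (emb (restrNat ν (i + 1))).getD i 0 := rfl
        rw [hηi]
        rcases Nat.lt_or_ge i k with h | h
        · -- i + 1 ≤ k
          have pre : emb (restrNat ν (i+1)) <+: emb (restrNat ν k) :=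
            emb_prefix (restrNat_prefix ν (by omega))
          have hlen : i < (emb (restrNat ν (i+1))).length := by
            have := length_le_emb (restrNat ν (i+1))
            rw [length_restrNat] at this; omega
          rw [List.getD_eq_getElem _ _ hlen]
          exact pre.getElem hlen
        · -- k ≤ i, so k ≤ i + 1
          have pre : emb (restrNat ν k) <+: emb (restrNat ν (i+1)) :=
            emb_prefix (restrNat_prefix ν (by omega))
          have hlen : i < (emb (restrNat ν (i+1))).length := by
            have := pre.length_le; omega
          rw [List.getD_eq_getElem _ _ hlen]
          exact (pre.getElem h2).symm
    obtain ⟨x, hx⟩ := hcons η (emb (restrNat ν N)).length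
    refine ⟨x, fun k hk => ?_⟩
    have hlt := emb_length_lt ν hk
    have := hx (emb (restrNat ν k)).length hlt
    rwa [key k] at this
  refine ⟨⟨b, inc', cons⟩, ?_⟩
  intro hs
  exact hs ⟨p, m, φ, M, b, inc', cons⟩

end Sh692
end

section
/- For all natural numbers n ≥ 1 and l, there exists m such that for every function f : (Fin m)^n → Fin n there exist j < n, a sequence σ ∈ (Fin m)^j, pairwise distinct k₀,…,k_l < m, and sequences ρ₀,…,ρ_l ∈ (Fin m)^n such that for each s ≤ l: σ ⌢ ⟨k_s⟩ is an initial segment of ρ_s, and f(ρ_s) = j. -/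
/-- Pigeonhole/subtree lemma: for all `n ≥ 1` and `l` there is `m` such that for every
colouring `f` of the length-`n` sequences over `Fin m` with `n` colours, there are a
colour `j < n`, a sequence `σ` of length `j`, pairwise distinct `k₀, …, k_l < m` and
length-`n` sequences `ρ₀, …, ρ_l` such that for each `s ≤ l`: `σ⌢⟨k_s⟩` is an initial
segment of `ρ_s` and `f(ρ_s) = j`. -/
theorem subtree_pigeonhole (n l : ℕ) (hn : 1 ≤ n) :
    ∃ m : ℕ, ∀ f : List (Fin m) → Fin n,
      ∃ (j : Fin n) (σ : List (Fin m)) (k : Fin (l + 1) → Fin m)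
        (ρ : Fin (l + 1) → List (Fin m)),
        σ.length = (j : ℕ) ∧ Function.Injective k ∧
        ∀ s : Fin (l + 1),
          (ρ s).length = n ∧ (σ ++ [k s]) <+: ρ s ∧ f (ρ s) = j := by
  suffices h : ∀ m : ℕ, n * l < m → ∀ f : List (Fin m) → Fin n,
      ∃ (j : Fin n) (σ : List (Fin m)) (k : Fin (l + 1) → Fin m)
        (ρ : Fin (l + 1) → List (Fin m)),
        σ.length = (j : ℕ) ∧ Function.Injective k ∧
        ∀ s : Fin (l + 1),
          (ρ s).length = n ∧ (σ ++ [k s]) <+: ρ s ∧ f (ρ s) = j by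
    exact ⟨n * l + 1, h _ (by omega)⟩
  intro m hml f
  have hm1 : 0 < m := by omega
  set c : (Fin n → Fin m) → Fin n := fun g => f (List.ofFn g) with hc
  -- Step 1: a popular colour
  have h1 : ∃ j : Fin n, l * m ^ (n - 1) <
      (Finset.univ.filter fun g : Fin n → Fin m => c g = j).card := by
    apply Fintype.exists_lt_card_fiber_of_mul_lt_card
    have hcard : Fintype.card (Fin n → Fin m) = m ^ n := by simp
    rw [hcard, Fintype.card_fin]
    have hs : m ^ n = m * m ^ (n - 1) := by
      conv_lhs => rw [show n = 1 + (n - 1) by omega]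
      rw [pow_add, pow_one]
    rw [hs]
    calc n * (l * m ^ (n - 1)) = (n * l) * m ^ (n - 1) := by ring
      _ < m * m ^ (n - 1) :=
        Nat.mul_lt_mul_of_lt_of_le hml le_rfl (pow_pos hm1 _)
  obtain ⟨j, hj⟩ := h1
  set S := Finset.univ.filter fun g : Fin n → Fin m => c g = j with hS
  have hj0 : (j : ℕ) < n := j.isLt
  -- Step 2: a popular prefix of length j among colour-j tuples
  set p : (Fin n → Fin m) → (Fin (j : ℕ) → Fin m) :=
    fun g i => g (Fin.castLE hj0.le i) with hp
  have h2 : ∃ σf : Fin (j : ℕ) → Fin m,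
      l * m ^ (n - 1 - (j : ℕ)) < (S.filter fun g => p g = σf).card := by
    have := Finset.exists_lt_card_fiber_of_mul_lt_card_of_maps_to
      (f := p) (s := S) (t := Finset.univ) (n := l * m ^ (n - 1 - (j : ℕ)))
      (fun a _ => Finset.mem_univ _) ?_
    · obtain ⟨y, _, hy⟩ := this
      exact ⟨y, hy⟩
    · have hcard : (Finset.univ : Finset (Fin (j : ℕ) → Fin m)).card = m ^ (j : ℕ) := by
        simp
      rw [hcard]
      calc m ^ (j : ℕ) * (l * m ^ (n - 1 - (j : ℕ)))
          = l * (m ^ (j : ℕ) * m ^ (n - 1 - (j : ℕ))) := by ring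
        _ = l * m ^ (n - 1) := by rw [← pow_add]; congr 2; omega
        _ < S.card := hj
  obtain ⟨σf, hσf⟩ := h2
  set T := S.filter fun g => p g = σf with hT
  set q : (Fin n → Fin m) → Fin m := fun g => g ⟨(j : ℕ), hj0⟩ with hq
  -- Step 3: at least l+1 distinct values at position j
  have h3 : l + 1 ≤ (T.image q).card := by
    by_contra hcon
    push_neg at hcon
    have himg : (T.image q).card ≤ l := by omega
    have hbound : ∀ b ∈ T.image q,
        (T.filter fun g => q g = b).card ≤ m ^ (n - 1 - (j : ℕ)) := by
      intro b _
      have hle : (T.filter fun g => q g = b).card ≤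
          (Finset.univ : Finset (Fin (n - 1 - (j : ℕ)) → Fin m)).card := by
        apply Finset.card_le_card_of_injOn
          (fun g (i : Fin (n - 1 - (j : ℕ))) => g ⟨(j : ℕ) + 1 + i, by omega⟩)
          (fun _ _ => Finset.mem_univ _)
        intro g₁ hg₁ g₂ hg₂ hgg
        simp only [Finset.mem_coe, Finset.mem_filter, hT] at hg₁ hg₂
        obtain ⟨⟨_, hp₁⟩, hq₁⟩ := hg₁
        obtain ⟨⟨_, hp₂⟩, hq₂⟩ := hg₂
        funext i
        rcases lt_trichotomy (i : ℕ) (j : ℕ) with hi | hi | hi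
        · have e1 : g₁ (Fin.castLE hj0.le ⟨(i : ℕ), hi⟩) = σf ⟨(i : ℕ), hi⟩ :=
            congrFun hp₁ ⟨(i : ℕ), hi⟩
          have e2 : g₂ (Fin.castLE hj0.le ⟨(i : ℕ), hi⟩) = σf ⟨(i : ℕ), hi⟩ :=
            congrFun hp₂ ⟨(i : ℕ), hi⟩
          have hcast : Fin.castLE hj0.le ⟨(i : ℕ), hi⟩ = i := by
            apply Fin.ext; rfl
          rw [hcast] at e1 e2
          rw [e1, e2]
        · have hi' : i = ⟨(j : ℕ), hj0⟩ := by apply Fin.ext; exact hi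
          rw [hi']
          have : q g₁ = q g₂ := by rw [hq₁, hq₂]
          simpa [hq] using this
        · have hil : (i : ℕ) - (j : ℕ) - 1 < n - 1 - (j : ℕ) := by omega
          have hgg' := congrFun hgg ⟨(i : ℕ) - (j : ℕ) - 1, hil⟩
          simp only at hgg'
          have hfix : (⟨(j : ℕ) + 1 + ((i : ℕ) - (j : ℕ) - 1), by omega⟩ : Fin n) = i := by
            apply Fin.ext; simp; omega
          rwa [hfix] at hgg'
      simpa using hle
    have hcm := Finset.card_le_mul_card_image (f := q) T (m ^ (n - 1 - (j : ℕ))) hbound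
    have hle : T.card ≤ m ^ (n - 1 - (j : ℕ)) * l :=
      le_trans hcm (Nat.mul_le_mul_left _ himg)
    rw [mul_comm] at hle
    omega
  obtain ⟨u, hu_sub, hu_card⟩ := Finset.exists_subset_card_eq h3
  set kfun : Fin (l + 1) → Fin m := fun s => (u.orderIsoOfFin hu_card s : Fin m) with hk
  have hkinj : Function.Injective kfun := by
    intro a b hab
    exact (u.orderIsoOfFin hu_card).injective (Subtype.ext hab)
  have hex : ∀ s : Fin (l + 1), ∃ g, g ∈ T ∧ q g = kfun s := by
    intro s
    have : kfun s ∈ T.image q := hu_sub (u.orderIsoOfFin hu_card s).2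
    obtain ⟨g, hg, hgq⟩ := Finset.mem_image.mp this
    exact ⟨g, hg, hgq⟩
  choose g hgT hgq using hex
  refine ⟨j, List.ofFn σf, kfun, fun s => List.ofFn (g s), by simp, hkinj, fun s => ?_⟩
  have hgS : g s ∈ S := (Finset.mem_filter.mp (hgT s)).1
  have hgp : p (g s) = σf := (Finset.mem_filter.mp (hgT s)).2
  have hgc : c (g s) = j := (Finset.mem_filter.mp hgS).2
  refine ⟨by simp, ?_, hgc⟩
  -- prefix claim
  have hkey : List.ofFn σf ++ [kfun s] = (List.ofFn (g s)).take ((j : ℕ) + 1) := by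
    apply List.ext_getElem
    · simp
    · intro i h1 h2
      have hi1 : i < (j : ℕ) + 1 := by
        simpa using h1
      rcases lt_or_ge i (j : ℕ) with hi | hi
      · rw [List.getElem_append_left (by simpa using hi)]
        rw [List.getElem_take, List.getElem_ofFn, List.getElem_ofFn]
        have := congrFun hgp ⟨i, hi⟩
        simp only [hp] at this
        rw [← this]
        congr 1
      · have hij : i = (j : ℕ) := by omega
        have hlen : (List.ofFn σf).length ≤ i := by simpa using hi
        rw [List.getElem_append_right hlen]
        rw [List.getElem_take, List.getElem_ofFn]
        have hsingle : [kfun s][i - (List.ofFn σf).length]'(by simp [hij]) = kfun s := by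
          simp [hij]
        rw [hsingle, ← hgq s]
        simp only [hq]
        congr 1
        apply Fin.ext
        simp [hij]
  rw [hkey]
  exact List.take_prefix _ _
end

section
/- Suppose ν_η ∈ 2^{<ω₁} and finite sets w_η ⊆ 2^{<ω₁} are assigned to all η ∈ 2^{<ω₁} in such a way that: (ii) β < lg(η) implies ν_{η↾β} ◁ ν_η; (iv) every ρ ∈ w_η has lg(ρ) < lg(ν_η); (v) w_η = ∅ when lg(η) is a limit ordinal; and p_η := ⋃{w_{η↾γ} : γ ≤ lg(η)} (as an index set of formulas) satisfies: for each η there is a finite q_η ⊆ p_η (playing the role of a finite inconsistency witness). If moreover each p_η is countable, then there exist a finite set q and η* ∈ 2^{ω₁} such that for every η₁ ∈ 2^{<ω₁} extending some fixed initial segment of η* there is η₂ ⊵ η₁ with q_{η₂} = q. More precisely: it is impossible that for every η ∈ 2^{<ω₁} there is g(η) ⊵ η in 2^{<ω₁} such that for all η₁ ⊵ g(η), q_{η₁} ⊄ p_η. -/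
attribute [local instance] Classical.propDecidable

/-- A binary sequence of countable ordinal length, i.e. an element of `2^{<ω₁}`. -/
structure CSeq : Type 1 where
  len : Ordinal.{0}
  len_lt : len < (Cardinal.aleph 1).ord
  val : ∀ β : Ordinal.{0}, β < len → Fin 2

namespace CSeq

/-- `s ⊴ t`: `s` is an initial segment of `t`. -/
def le (s t : CSeq) : Prop :=
  ∃ h : s.len ≤ t.len, ∀ (β : Ordinal) (hβ : β < s.len), s.val β hβ = t.val β (hβ.trans_le h)

/-- `s ◁ t`: `s` is a proper initial segment of `t`. -/
def lt (s t : CSeq) : Prop := le s t ∧ s.len < t.len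

/-- The restriction `s↾γ`. -/
noncomputable def restrict (s : CSeq) (γ : Ordinal) : CSeq :=
  if h : γ ≤ s.len then ⟨γ, lt_of_le_of_lt h s.len_lt, fun β hβ => s.val β (hβ.trans_le h)⟩
  else s

end CSeq


section Aux

lemma cseq_le_refl (s : CSeq) : s.le s := ⟨le_rfl, fun _ _ => rfl⟩

lemma cseq_le_trans {s t u : CSeq} (h1 : s.le t) (h2 : t.le u) : s.le u := by
  obtain ⟨h1l, h1v⟩ := h1
  obtain ⟨h2l, h2v⟩ := h2
  exact ⟨h1l.trans h2l, fun β hβ => (h1v β hβ).trans (h2v β (hβ.trans_le h1l))⟩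

lemma cseq_restrict_eq_of_le {s t : CSeq} (h : s.le t) {γ : Ordinal} (hγ : γ ≤ s.len) :
    t.restrict γ = s.restrict γ := by
  obtain ⟨hl, hv⟩ := h
  rw [CSeq.restrict, CSeq.restrict, dif_pos hγ, dif_pos (hγ.trans hl)]
  congr 1
  funext β hβ
  exact (hv β (hβ.trans_le hγ)).symm

lemma cseq_restrict_self (s : CSeq) : s.restrict s.len = s := by
  rw [CSeq.restrict, dif_pos le_rfl]

end Aux

/-- Suppose `ν_η ∈ 2^{<ω₁}` and finite `w_η ⊆ 2^{<ω₁}` are assigned to all `η ∈ 2^{<ω₁}`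
with: (ii) `β < lg η` implies `ν_{η↾β} ◁ ν_η`; (iv) every `ρ ∈ w_η` has
`lg ρ < lg ν_η`; (v) `w_η = ∅` when `lg η` is a limit; and with
`p_η = ⋃ {w_{η↾γ} : γ ≤ lg η}`, each `η` has a finite `q_η ⊆ p_η`.  Then it is
impossible that for every `η` there is `g(η) ⊵ η` such that for all `η₁ ⊵ g(η)`,
`q_{η₁} ⊄ p_η`. -/


theorem no_uniform_escape
    (ν : CSeq → CSeq) (w : CSeq → Set CSeq)
    (hwfin : ∀ η, (w η).Finite)
    (hii : ∀ (η : CSeq) (β : Ordinal), β < η.len → (ν (η.restrict β)).lt (ν η))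
    (hiv : ∀ η, ∀ ρ ∈ w η, ρ.len < (ν η).len)
    (hv : ∀ η, Order.IsSuccLimit η.len → w η = ∅)
    (p : CSeq → Set CSeq)
    (hp : ∀ η, p η = {a | ∃ γ ≤ η.len, a ∈ w (η.restrict γ)})
    (q : CSeq → Set CSeq) (hqfin : ∀ η, (q η).Finite) (hq : ∀ η, q η ⊆ p η) :
    ¬ ∃ g : CSeq → CSeq, ∀ η : CSeq,
        η.le (g η) ∧ ∀ η₁ : CSeq, (g η).le η₁ → ¬ q η₁ ⊆ p η := by
  rintro ⟨g, hg⟩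
  -- build the ω-iteration of g starting from the empty sequence
  set η₀ : CSeq := ⟨0, by
      simpa using (Cardinal.isSuccLimit_ord (Cardinal.aleph0_le_aleph 1)).bot_lt,
    fun β hβ => absurd hβ (not_lt_of_ge (zero_le (a := β)))⟩ with hη₀
  let e : ℕ → CSeq := fun n => Nat.rec η₀ (fun _ s => g s) n
  have hstep : ∀ n, (e n).le (e (n + 1)) := fun n => (hg (e n)).1
  have hchain : ∀ {m n : ℕ}, m ≤ n → (e m).le (e n) := by
    intro m n hmn
    induction n with
    | zero => cases Nat.le_zero.mp hmn; exact cseq_le_refl _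
    | succ n ih =>
      rcases Nat.le_succ_iff.mp hmn with h | h
      · exact cseq_le_trans (ih h) (hstep n)
      · cases h; exact cseq_le_refl _
  -- the limit sequence
  set L : Ordinal := ⨆ n, (e n).len with hL
  have hBdd := Ordinal.bddAbove_range fun n => (e n).len
  have hle_L : ∀ n, (e n).len ≤ L := fun n => le_ciSup hBdd n
  have hlt_L : ∀ β, β < L → ∃ n, β < (e n).len := fun β hβ =>
    (lt_ciSup_iff hBdd).mp hβ
  have hLlt : L < (Cardinal.aleph 1).ord := by
    apply Ordinal.iSup_lt_ord ?_ fun n => (e n).len_lt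
    rw [Cardinal.isRegular_aleph_one.cof_eq]; simpa using Cardinal.aleph0_lt_aleph_one
  set η : CSeq := ⟨L, hLlt, fun β hβ =>
    (e (hlt_L β hβ).choose).val β (hlt_L β hβ).choose_spec⟩ with hηdef
  -- any two members of the chain agree wherever both are defined
  have hcompat : ∀ (m n : ℕ) (β : Ordinal) (hm : β < (e m).len) (hn : β < (e n).len),
      (e m).val β hm = (e n).val β hn := by
    intro m n β hm hn
    rcases le_total m n with h | h
    · exact (hchain h).2 β hm
    · exact ((hchain h).2 β hn).symm
  have hle_η : ∀ n, (e n).le η := by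
    intro n
    refine ⟨hle_L n, fun β hβ => ?_⟩
    have hβ' : β < L := hβ.trans_le (hle_L n)
    exact hcompat n (hlt_L β hβ').choose β hβ (hlt_L β hβ').choose_spec
  -- p is monotone along ⊴
  have hmono : ∀ {s t : CSeq}, s.le t → p s ⊆ p t := by
    intro s t hst a ha
    rw [hp] at ha ⊢
    obtain ⟨γ, hγ, haw⟩ := ha
    refine ⟨γ, hγ.trans hst.1, ?_⟩
    rwa [cseq_restrict_eq_of_le hst hγ]
  -- p η is covered by the p (e n)
  have hcover : p η ⊆ ⋃ n, p (e n) := by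
    intro a ha
    rw [hp] at ha
    obtain ⟨γ, hγ, haw⟩ := ha
    have hmem : ∀ n, γ ≤ (e n).len → a ∈ ⋃ m, p (e m) := by
      intro n hn
      refine Set.mem_iUnion.mpr ⟨n, ?_⟩
      rw [hp]
      refine ⟨γ, hn, ?_⟩
      rwa [← cseq_restrict_eq_of_le (hle_η n) hn]
    rcases lt_or_eq_of_le hγ with h | h
    · obtain ⟨n, hn⟩ := hlt_L γ h
      exact hmem n hn.le
    · by_cases hatt : ∃ n, L ≤ (e n).len
      · obtain ⟨n, hn⟩ := hatt
        exact hmem n (h ▸ hn)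
      · push_neg at hatt
        have hlim : Order.IsSuccLimit L := by
          refine Ordinal.isSuccLimit_iff.mpr ⟨fun h0 => absurd (h0 ▸ hatt 0) (by simp), Order.isSuccPrelimit_of_succ_lt fun α hα => ?_⟩
          obtain ⟨n, hn⟩ := hlt_L α hα
          exact lt_of_le_of_lt (Order.succ_le_of_lt hn) (hatt n)
        have : η.restrict γ = η := h ▸ cseq_restrict_self η
        rw [this] at haw
        have : w η = ∅ := hv η (by simpa [hηdef] using hlim)
        simp [this] at haw
  -- a finite subset of the increasing union lies in one member
  have hfind : ∀ s : Set CSeq, s.Finite → s ⊆ ⋃ n, p (e n) → ∃ n, s ⊆ p (e n) := by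
    intro s hs
    refine Set.Finite.induction_on
      (motive := fun s _ => s ⊆ (⋃ n, p (e n)) → ∃ n, s ⊆ p (e n)) s hs
      (fun _ => ⟨0, Set.empty_subset _⟩) ?_
    intro a s ha hsf ih hsub
    obtain ⟨n, hn⟩ := ih fun x hx => hsub (Set.mem_insert_of_mem a hx)
    obtain ⟨m, hm⟩ := Set.mem_iUnion.mp (hsub (Set.mem_insert a s))
    refine ⟨max n m, Set.insert_subset ?_ fun x hx => ?_⟩
    · exact hmono (hchain (le_max_right n m)) hm
    · exact hmono (hchain (le_max_left n m)) (hn hx)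
  obtain ⟨n, hn⟩ := hfind (q η) (hqfin η) fun x hx => hcover (hq η hx)
  exact (hg (e n)).2 η (cseq_le_trans (cseq_le_refl _) (hle_η (n+1))) hn
end
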